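/- Let ζ₁ and ζ₂ be jointly complex Gaussian random variables (centered) with E[|ζ₂|²] > 0, and let 1 ≤ p < 2. Then E[|ζ₁/ζ₂|^p] < ∞. -/

import Mathlib

open MeasureTheory

/-- The standard complex Gaussian distribution: density `(1/π) e^{-|z|²}`
with respect to Lebesgue measure on `ℂ`. -/
noncomputable def stdCGaussian : Measure ℂ :=
  volume.withDensity (fun z => ENNReal.ofReal ((1 / Real.pi) * Real.exp (-‖z‖ ^ 2)))

open Set Real

/-- Integrability of `‖z‖^q e^{-‖z‖²}` on `ℂ` for `q > -2`, via polar coordinates. -/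
lemma integrable_rpow_mul_exp_neg_sq_complex {q : ℝ} (hq : -2 < q) :
    Integrable (fun z : ℂ => ‖z‖ ^ q * Real.exp (-‖z‖ ^ 2)) := by
  set g : ℂ → ℝ := fun z => ‖z‖ ^ q * Real.exp (-‖z‖ ^ 2) with hg
  rw [← (Complex.volume_preserving_equiv_real_prod.symm).integrable_comp_emb
    Complex.measurableEquivRealProd.symm.measurableEmbedding]
  set h : ℝ × ℝ → ℝ := g ∘ Complex.measurableEquivRealProd.symm with hh
  have hsrc : IntegrableOn h polarCoord.source volume → Integrable h := by
    intro hint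
    rw [← integrableOn_univ]
    exact hint.congr_set_ae polarCoord_source_ae_eq_univ.symm
  apply hsrc
  rw [← polarCoord.symm_image_target_eq_source]
  -- Jacobian change of variables
  set B : ℝ × ℝ → ℝ × ℝ →L[ℝ] ℝ × ℝ := fun p =>
    LinearMap.toContinuousLinearMap (Matrix.toLin (Module.Basis.finTwoProd ℝ) (Module.Basis.finTwoProd ℝ)
      !![Real.cos p.2, -p.1 * Real.sin p.2; Real.sin p.2, p.1 * Real.cos p.2]) with hB
  have hder : ∀ p ∈ polarCoord.target,
      HasFDerivWithinAt polarCoord.symm (B p) polarCoord.target p := fun p _ =>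
    (hasFDerivAt_polarCoord_symm p).hasFDerivWithinAt
  have B_det : ∀ p, (B p).det = p.1 := by
    intro p
    conv_rhs => rw [← one_mul p.1, ← Real.cos_sq_add_sin_sq p.2]
    simp only [hB, neg_mul, LinearMap.det_toContinuousLinearMap, LinearMap.det_toLin,
      Matrix.det_fin_two_of, sub_neg_eq_add]
    ring
  rw [integrableOn_image_iff_integrableOn_abs_det_fderiv_smul volume
    polarCoord.open_target.measurableSet hder polarCoord.symm.injOn h]
  -- Now integrability on the target rectangle
  have key : IntegrableOn (fun p : ℝ × ℝ => (p.1 ^ (q + 1) * Real.exp (-p.1 ^ 2)) * 1)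
      (Ioi (0:ℝ) ×ˢ Ioo (-π) π) volume := by
    rw [IntegrableOn, Measure.volume_eq_prod, ← Measure.prod_restrict]
    have h1 : Integrable (fun x : ℝ => x ^ (q + 1) * Real.exp (-x ^ 2))
        (volume.restrict (Ioi (0:ℝ))) := by
      have := integrableOn_rpow_mul_exp_neg_mul_sq (b := 1) one_pos
        (s := q + 1) (by linarith)
      simpa [IntegrableOn] using this
    have h2 : Integrable (fun _ : ℝ => (1:ℝ)) (volume.restrict (Ioo (-π) π)) :=
      integrableOn_const measure_Ioo_lt_top.ne
    exact h1.mul_prod h2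
  apply key.congr_fun _ (measurableSet_Ioi.prod measurableSet_Ioo)
  rintro ⟨r, θ⟩ ⟨hr, hθ⟩
  simp only [mem_Ioi] at hr
  have hsymm : Complex.measurableEquivRealProd.symm (polarCoord.symm (r, θ)) =
      Complex.polarCoord.symm (r, θ) := rfl
  have habs : ‖Complex.polarCoord.symm (r, θ)‖ = r := by
    rw [Complex.norm_polarCoord_symm, abs_of_pos hr]
  simp only [hh, Function.comp_apply, hsymm, hg, habs, smul_eq_mul, mul_one]
  rw [Real.rpow_add hr, Real.rpow_one, B_det, abs_of_pos hr]
  ring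

/-- Moments of the standard complex Gaussian: `‖z‖^q` is integrable for `q > -2`. -/
lemma integrable_rpow_stdCGaussian {q : ℝ} (hq : -2 < q) :
    Integrable (fun z : ℂ => ‖z‖ ^ q) stdCGaussian := by
  have hmeas : Measurable fun z : ℂ =>
      ENNReal.ofReal ((1 / Real.pi) * Real.exp (-‖z‖ ^ 2)) := by fun_prop
  rw [stdCGaussian, integrable_withDensity_iff hmeas
    (Filter.Eventually.of_forall fun _ => ENNReal.ofReal_lt_top)]
  have hpos : ∀ z : ℂ, 0 ≤ (1 / Real.pi) * Real.exp (-‖z‖ ^ 2) := fun z => by positivity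
  have : (fun z : ℂ => ‖z‖ ^ q *
      (ENNReal.ofReal ((1 / Real.pi) * Real.exp (-‖z‖ ^ 2))).toReal) =
      fun z : ℂ => (1 / Real.pi) * (‖z‖ ^ q * Real.exp (-‖z‖ ^ 2)) := by
    funext z
    rw [ENNReal.toReal_ofReal (hpos z)]
    ring
  rw [this]
  exact (integrable_rpow_mul_exp_neg_sq_complex hq).const_mul _

lemma add_rpow_le_two_rpow_mul (a b : ℝ) (ha : 0 ≤ a) (hb : 0 ≤ b) {p : ℝ} (hp : 0 ≤ p) :
    (a + b) ^ p ≤ 2 ^ p * (a ^ p + b ^ p) := by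
  have h1 : a + b ≤ 2 * max a b := by
    rcases le_total a b with h | h
    · rw [max_eq_right h]; linarith
    · rw [max_eq_left h]; linarith
  calc (a + b) ^ p ≤ (2 * max a b) ^ p :=
        Real.rpow_le_rpow (by positivity) h1 hp
    _ = 2 ^ p * (max a b) ^ p := Real.mul_rpow (by norm_num) (le_max_of_le_left ha)
    _ ≤ 2 ^ p * (a ^ p + b ^ p) := by
        apply mul_le_mul_of_nonneg_left _ (by positivity)
        rcases le_total a b with h | h
        · rw [max_eq_right h]
          exact le_add_of_nonneg_left (Real.rpow_nonneg ha p)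
        · rw [max_eq_left h]
          exact le_add_of_nonneg_right (Real.rpow_nonneg hb p)

/-- If `ζ₁, ζ₂` are centered jointly complex Gaussian (represented via i.i.d. standard
complex Gaussians `Z₁, Z₂` as `ζ₁ = αZ₁ + βZ₂`, `ζ₂ = γZ₁`) with `E[|ζ₂|²] > 0`,
and `1 ≤ p < 2`, then `E[|ζ₁/ζ₂|^p] < ∞`. -/
theorem stmt2 {Ω : Type*} [MeasurableSpace Ω] (P : Measure Ω) [IsProbabilityMeasure P]
    (Z₁ Z₂ : Ω → ℂ) (hm₁ : Measurable Z₁) (hm₂ : Measurable Z₂)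
    (hl₁ : Measure.map Z₁ P = stdCGaussian) (hl₂ : Measure.map Z₂ P = stdCGaussian)
    (hind : ProbabilityTheory.IndepFun Z₁ Z₂ P)
    (α β γ : ℂ) (ζ₁ ζ₂ : Ω → ℂ)
    (hζ₁ : ζ₁ = fun ω => α * Z₁ ω + β * Z₂ ω)
    (hζ₂ : ζ₂ = fun ω => γ * Z₁ ω)
    (hvar : 0 < ∫ ω, ‖ζ₂ ω‖ ^ 2 ∂P)
    (p : ℝ) (hp1 : 1 ≤ p) (hp2 : p < 2) :
    Integrable (fun ω => ‖ζ₁ ω / ζ₂ ω‖ ^ p) P := by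
  subst hζ₁ hζ₂
  have hγ : γ ≠ 0 := by
    rintro rfl
    simp at hvar
  haveI : IsProbabilityMeasure stdCGaussian :=
    hl₁ ▸ Measure.isProbabilityMeasure_map hm₁.aemeasurable
  -- the law of the pair is the product measure
  have hmap : Measure.map (fun ω => (Z₁ ω, Z₂ ω)) P = stdCGaussian.prod stdCGaussian := by
    rw [(ProbabilityTheory.indepFun_iff_map_prod_eq_prod_map_map hm₁.aemeasurable
      hm₂.aemeasurable).mp hind, hl₁, hl₂]
  have hp0 : p ≠ 0 := by linarith
  -- integrability of ‖Z₂/Z₁‖^p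
  have hfmeas : Measurable fun q : ℂ × ℂ => ‖q.2 / q.1‖ ^ p := by
    have : Measurable fun q : ℂ × ℂ => ‖q.2 / q.1‖ :=
      (measurable_snd.div measurable_fst).norm
    fun_prop
  have hWprod : Integrable (fun q : ℂ × ℂ => ‖q.2 / q.1‖ ^ p)
      (stdCGaussian.prod stdCGaussian) := by
    have h1 : Integrable (fun z : ℂ => ‖z‖ ^ (-p)) stdCGaussian :=
      integrable_rpow_stdCGaussian (by linarith)
    have h2 : Integrable (fun z : ℂ => ‖z‖ ^ p) stdCGaussian :=
      integrable_rpow_stdCGaussian (by linarith)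
    have heq : ∀ q : ℂ × ℂ, ‖q.1‖ ^ (-p) * ‖q.2‖ ^ p = ‖q.2 / q.1‖ ^ p := by
      rintro ⟨z₁, z₂⟩
      by_cases hz : z₁ = 0
      · simp [hz, Real.zero_rpow hp0, Real.zero_rpow (neg_ne_zero.2 hp0)]
      · have hz' : ‖z₁‖ ≠ 0 := norm_ne_zero_iff.2 hz
        rw [norm_div, Real.div_rpow (norm_nonneg _) (norm_nonneg _),
          Real.rpow_neg (norm_nonneg _)]
        field_simp
    exact (h1.mul_prod h2).congr (Filter.Eventually.of_forall heq)
  have hW : Integrable (fun ω => ‖Z₂ ω / Z₁ ω‖ ^ p) P := by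
    have := (integrable_map_measure (hmap ▸ hfmeas.aestronglyMeasurable)
      (hm₁.prodMk hm₂).aemeasurable).mp (hmap ▸ hWprod)
    exact this
  -- Z₁ is a.e. nonzero
  have hZ₁ne : ∀ᵐ ω ∂P, Z₁ ω ≠ 0 := by
    have h0 : stdCGaussian ({0} : Set ℂ) = 0 := by
      rw [stdCGaussian, withDensity_apply _ (measurableSet_singleton 0),
        setLIntegral_measure_zero _ _ (measure_singleton 0)]
    have : P (Z₁ ⁻¹' {0}) = 0 := by
      rw [← Measure.map_apply hm₁ (measurableSet_singleton 0), hl₁, h0]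
    filter_upwards [measure_eq_zero_iff_ae_notMem.mp this] with ω hω
    exact hω
  -- final domination argument
  set c₁ : ℝ := ‖α / γ‖
  set c₂ : ℝ := ‖β / γ‖
  have hg : Integrable (fun ω => 2 ^ p * (c₁ ^ p + c₂ ^ p * ‖Z₂ ω / Z₁ ω‖ ^ p)) P :=
    ((integrable_const _).add (hW.const_mul _)).const_mul _
  refine hg.mono' ?_ ?_
  · have hb : Measurable fun ω => ‖(α * Z₁ ω + β * Z₂ ω) / (γ * Z₁ ω)‖ :=
      (((hm₁.const_mul α).add (hm₂.const_mul β)).div (hm₁.const_mul γ)).norm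
    exact (by fun_prop : Measurable fun ω =>
      ‖(α * Z₁ ω + β * Z₂ ω) / (γ * Z₁ ω)‖ ^ p).aestronglyMeasurable
  · filter_upwards [hZ₁ne] with ω hω
    rw [Real.norm_of_nonneg (Real.rpow_nonneg (norm_nonneg _) p)]
    have hdiv : (α * Z₁ ω + β * Z₂ ω) / (γ * Z₁ ω) = α / γ + β / γ * (Z₂ ω / Z₁ ω) := by
      field_simp
    have hnorm : ‖(α * Z₁ ω + β * Z₂ ω) / (γ * Z₁ ω)‖ ≤ c₁ + c₂ * ‖Z₂ ω / Z₁ ω‖ := by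
      rw [hdiv]
      refine (norm_add_le _ _).trans ?_
      rw [norm_mul]
    calc ‖(α * Z₁ ω + β * Z₂ ω) / (γ * Z₁ ω)‖ ^ p
        ≤ (c₁ + c₂ * ‖Z₂ ω / Z₁ ω‖) ^ p :=
          Real.rpow_le_rpow (norm_nonneg _) hnorm (by linarith)
      _ ≤ 2 ^ p * (c₁ ^ p + (c₂ * ‖Z₂ ω / Z₁ ω‖) ^ p) :=
          add_rpow_le_two_rpow_mul _ _ (norm_nonneg _) (by positivity) (by linarith)
      _ = 2 ^ p * (c₁ ^ p + c₂ ^ p * ‖Z₂ ω / Z₁ ω‖ ^ p) := by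
          rw [Real.mul_rpow (norm_nonneg _) (norm_nonneg _)]
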